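/- For H ∈ (0,1), define σ²(t) = 2∫_0^t ∫_0^x e^{-x-y}(x^{2H} + y^{2H} - (x-y)^{2H}) dy dx. Then σ²(t) = Γ(2H+1, t)(1 - 2e^{-t}) + e^{-2t} Γ*(2H+1, t), where Γ(a,t) = ∫_0^t x^{a-1} e^{-x} dx is the lower incomplete gamma function and Γ*(a,t) = ∫_0^t x^{a-1} e^{x} dx. -/

import Mathlib

open MeasureTheory intervalIntegral Real

lemma inner_split (a : ℝ) (ha : 0 < a) (x : ℝ) :
    ∫ y in (0:ℝ)..x, Real.exp (-x - y) * (x ^ a + y ^ a - (x - y) ^ a)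
      = Real.exp (-x) * (x ^ a * (1 - Real.exp (-x))
          + (∫ y in (0:ℝ)..x, y ^ a * Real.exp (-y))
          - Real.exp (-x) * ∫ y in (0:ℝ)..x, y ^ a * Real.exp y) := by
  have hc : Continuous fun y : ℝ => y ^ a :=
    continuous_iff_continuousAt.2 fun y => Real.continuousAt_rpow_const y a (Or.inr ha.le)
  have hrw : ∀ y : ℝ, Real.exp (-x - y) * (x ^ a + y ^ a - (x - y) ^ a)
      = Real.exp (-x) * (Real.exp (-y) * x ^ a + y ^ a * Real.exp (-y)
          - Real.exp (-y) * (x - y) ^ a) := by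
    intro y
    rw [show -x - y = -x + -y by ring, Real.exp_add]; ring
  simp_rw [hrw]
  rw [intervalIntegral.integral_const_mul]
  congr 1
  have hcexp : Continuous fun y : ℝ => Real.exp (-y) :=
    Real.continuous_exp.comp continuous_neg
  have h1 : IntervalIntegrable (fun y => Real.exp (-y) * x ^ a) volume 0 x :=
    (hcexp.mul continuous_const).intervalIntegrable 0 x
  have h2 : IntervalIntegrable (fun y => y ^ a * Real.exp (-y)) volume 0 x :=
    (hc.mul hcexp).intervalIntegrable 0 x
  have h3 : IntervalIntegrable (fun y => Real.exp (-y) * (x - y) ^ a) volume 0 x :=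
    (hcexp.mul (hc.comp (continuous_const.sub continuous_id))).intervalIntegrable 0 x
  rw [intervalIntegral.integral_sub (h1.add h2) h3, intervalIntegral.integral_add h1 h2]
  have e1 : (∫ y in (0:ℝ)..x, Real.exp (-y) * x ^ a) = x ^ a * (1 - Real.exp (-x)) := by
    rw [intervalIntegral.integral_mul_const]
    have : (∫ y in (0:ℝ)..x, Real.exp (-y)) = 1 - Real.exp (-x) := by
      rw [intervalIntegral.integral_comp_neg (fun y => Real.exp y)]
      simp [integral_exp]
    rw [this]; ring
  have e3 : (∫ y in (0:ℝ)..x, Real.exp (-y) * (x - y) ^ a)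
      = Real.exp (-x) * ∫ y in (0:ℝ)..x, y ^ a * Real.exp y := by
    have step : ∀ y : ℝ, Real.exp (-y) * (x - y) ^ a
        = (fun u => Real.exp (-x) * (u ^ a * Real.exp u)) (x - y) := by
      intro y
      simp only
      rw [Real.exp_sub, Real.exp_neg, Real.exp_neg]
      field_simp
    calc (∫ y in (0:ℝ)..x, Real.exp (-y) * (x - y) ^ a)
        = ∫ y in (0:ℝ)..x, (fun u => Real.exp (-x) * (u ^ a * Real.exp u)) (x - y) := by
          exact intervalIntegral.integral_congr fun y _ => step y
      _ = ∫ u in (x - x)..(x - 0), Real.exp (-x) * (u ^ a * Real.exp u) := by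
          exact intervalIntegral.integral_comp_sub_left (fun u => Real.exp (-x) * (u ^ a * Real.exp u)) x
      _ = Real.exp (-x) * ∫ y in (0:ℝ)..x, y ^ a * Real.exp y := by
          rw [sub_self, sub_zero, intervalIntegral.integral_const_mul]
  rw [e1, e3]


theorem variance_discounted_integrated_fbm
    (H : ℝ) (hH : H ∈ Set.Ioo (0 : ℝ) 1) (t : ℝ) (ht : 0 ≤ t) :
    2 * ∫ x in (0 : ℝ)..t, ∫ y in (0 : ℝ)..x,
        Real.exp (-x - y) * (x ^ (2 * H) + y ^ (2 * H) - (x - y) ^ (2 * H)) =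
      (∫ x in (0 : ℝ)..t, x ^ (2 * H + 1 - 1) * Real.exp (-x)) * (1 - 2 * Real.exp (-t)) +
        Real.exp (-2 * t) * ∫ x in (0 : ℝ)..t, x ^ (2 * H + 1 - 1) * Real.exp x := by
  have hexp : (2 * H + 1 - 1 : ℝ) = 2 * H := by ring
  rw [hexp]
  set a : ℝ := 2 * H with ha_def
  have ha : 0 < a := by have := hH.1; positivity
  have hc : Continuous fun y : ℝ => y ^ a :=
    continuous_iff_continuousAt.2 fun y => Real.continuousAt_rpow_const y a (Or.inr ha.le)
  have hcexp : Continuous fun y : ℝ => Real.exp (-y) :=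
    Real.continuous_exp.comp continuous_neg
  set G : ℝ → ℝ := fun u => ∫ x in (0:ℝ)..u, x ^ a * Real.exp (-x) with hGdef
  set K : ℝ → ℝ := fun u => ∫ x in (0:ℝ)..u, x ^ a * Real.exp x with hKdef
  have hG : ∀ u, HasDerivAt G (u ^ a * Real.exp (-u)) u := fun u =>
    ((hc.mul hcexp).integral_hasStrictDerivAt 0 u).hasDerivAt
  have hK : ∀ u, HasDerivAt K (u ^ a * Real.exp u) u := fun u =>
    ((hc.mul Real.continuous_exp).integral_hasStrictDerivAt 0 u).hasDerivAt
  have hGc : Continuous G := continuous_iff_continuousAt.2 fun u => (hG u).continuousAt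
  have hKc : Continuous K := continuous_iff_continuousAt.2 fun u => (hK u).continuousAt
  set F : ℝ → ℝ := fun u => G u * (1 - 2 * Real.exp (-u)) + Real.exp (-2 * u) * K u with hFdef
  have hneg : ∀ u : ℝ, HasDerivAt (fun v : ℝ => Real.exp (-v)) (-Real.exp (-u)) u := by
    intro u
    have h := (hasDerivAt_neg u).exp
    convert h using 1; ring
  have hneg2 : ∀ u : ℝ, HasDerivAt (fun v : ℝ => Real.exp (-2 * v)) (-2 * Real.exp (-2 * u)) u := by
    intro u
    have h := ((hasDerivAt_id u).const_mul (-2)).exp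
    convert h using 1; simp; change _ = Real.exp (-2 * u) * (-2 * 1); ring
  have hF : ∀ u, HasDerivAt F
      (2 * (Real.exp (-u) * (u ^ a * (1 - Real.exp (-u)) + G u - Real.exp (-u) * K u))) u := by
    intro u
    have h := ((hG u).mul ((hasDerivAt_const u (1:ℝ)).sub ((hneg u).const_mul 2))).add
      ((hneg2 u).mul (hK u))
    refine h.congr_deriv (Eq.symm ?_)
    simp only [Pi.sub_apply]
    have e1 : Real.exp (-2 * u) = (Real.exp u)⁻¹ * (Real.exp u)⁻¹ := by
      rw [← Real.exp_neg, ← Real.exp_add]; ring_nf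
    have e2 : Real.exp (-u) = (Real.exp u)⁻¹ := Real.exp_neg u
    rw [e1, e2]
    have : Real.exp u ≠ 0 := Real.exp_ne_zero u
    field_simp
    ring
  have hcontD : Continuous (fun u : ℝ =>
      2 * (Real.exp (-u) * (u ^ a * (1 - Real.exp (-u)) + G u - Real.exp (-u) * K u))) := by
    apply continuous_const.mul
    exact hcexp.mul (((hc.mul (continuous_const.sub hcexp)).add hGc).sub (hcexp.mul hKc))
  have key : (∫ u in (0:ℝ)..t,
      2 * (Real.exp (-u) * (u ^ a * (1 - Real.exp (-u)) + G u - Real.exp (-u) * K u)))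
      = F t - F 0 :=
    intervalIntegral.integral_eq_sub_of_hasDerivAt (fun u _ => hF u)
      (hcontD.intervalIntegrable 0 t)
  have hF0 : F 0 = 0 := by
    simp [hFdef, hGdef, hKdef, intervalIntegral.integral_same]
  calc 2 * ∫ x in (0:ℝ)..t, ∫ y in (0:ℝ)..x,
        Real.exp (-x - y) * (x ^ a + y ^ a - (x - y) ^ a)
      = ∫ x in (0:ℝ)..t, 2 * ∫ y in (0:ℝ)..x,
          Real.exp (-x - y) * (x ^ a + y ^ a - (x - y) ^ a) :=
        (intervalIntegral.integral_const_mul 2 _).symm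
    _ = ∫ u in (0:ℝ)..t,
        2 * (Real.exp (-u) * (u ^ a * (1 - Real.exp (-u)) + G u - Real.exp (-u) * K u)) := by
        refine intervalIntegral.integral_congr fun x _ => ?_
        rw [inner_split a ha x]
    _ = F t - F 0 := key
    _ = G t * (1 - 2 * Real.exp (-t)) + Real.exp (-2 * t) * K t := by rw [hF0]; ring
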